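/- If the label ℓ(u) of a vertex u is a prefix of the label ℓ(v) of a vertex v, and u is a ranked vertex, then v is reachable from u (there is a directed path from u to v). -/
import Mathlib


open Classical Finset
open scoped Classical

noncomputable section

variable {V : Type*}

/-- Reachability: `reach adj u v` iff there is a directed path from `u` to `v`
(including the trivial path, so `reach adj v v` always holds). -/
def reach (adj : V → V → Prop) : V → V → Prop := Relation.ReflTransGen adj

/-- The graph has no (nontrivial) directed cycle. -/
def IsAcyclic (adj : V → V → Prop) : Prop := ∀ x, ¬ Relation.TransGen adj x x

/-- `P(v)`: the set of predecessors of `v` (vertices with a path to `v`, including `v`). -/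
def predSet [Fintype V] (adj : V → V → Prop) (v : V) : Finset V :=
  Finset.univ.filter fun u => reach adj u v

/-- `S(v)`: the set of successors of `v` (vertices reachable from `v`, including `v`). -/
def succSet [Fintype V] (adj : V → V → Prop) (v : V) : Finset V :=
  Finset.univ.filter fun u => reach adj v u

/-- The element of `A` of minimum rank (an arbitrary vertex if `A = ∅`). -/
def argminR [Nonempty V] (r : V → ℕ∞) (A : Finset V) : V :=
  if h : A.Nonempty then (Finset.exists_min_image A r h).choose else Classical.arbitrary V

/-- The sets `A_{i+1}(v)` (0-indexed: `Aset adj L r v i` is the paper's `A_{i+1}(v)`):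
`A_1(v) = P(v) ∩ L`, and `A_{i+1}(v) = (S(ℓ_i(v)) ∩ P(v) ∩ L) \ {ℓ_i(v)}` where
`ℓ_i(v)` is the minimum-rank element of `A_i(v)`. -/
def Aset [Fintype V] [Nonempty V] (adj : V → V → Prop) (L : Finset V) (r : V → ℕ∞)
    (v : V) : ℕ → Finset V
  | 0 => predSet adj v ∩ L
  | i + 1 =>
    if (Aset adj L r v i).Nonempty then
      (succSet adj (argminR r (Aset adj L r v i)) ∩ predSet adj v ∩ L).erase
        (argminR r (Aset adj L r v i))
    else ∅

/-- `ℓ_{i+1}(v)` (0-indexed). -/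
def labVertex [Fintype V] [Nonempty V] (adj : V → V → Prop) (L : Finset V) (r : V → ℕ∞)
    (v : V) (i : ℕ) : V := argminR r (Aset adj L r v i)

/-- `k(v)`: the number of indices `i` with `A_{i+1}(v) ≠ ∅` (in a DAG the sets shrink,
so this is the largest `i` with `A_i(v) ≠ ∅`, in the paper's 1-indexed convention). -/
def kOf [Fintype V] [Nonempty V] (adj : V → V → Prop) (L : Finset V) (r : V → ℕ∞) (v : V) : ℕ :=
  ((Finset.range (Fintype.card V + 1)).filter fun i => (Aset adj L r v i).Nonempty).card

/-- The label `ℓ(v) = (ℓ_1(v), …, ℓ_{k(v)}(v))`. -/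
def labelSeq [Fintype V] [Nonempty V] (adj : V → V → Prop) (L : Finset V) (r : V → ℕ∞)
    (v : V) : List V :=
  (List.range (kOf adj L r v)).map (labVertex adj L r v)

/-- The rank sequence `r(ℓ(v))` with `+∞` appended. -/
def rankSeq [Fintype V] [Nonempty V] (adj : V → V → Prop) (L : Finset V) (r : V → ℕ∞)
    (v : V) : List ℕ∞ :=
  ((labelSeq adj L r v).map r) ++ [⊤]

/-- `ℓ(u) ≺ ℓ(v)`: decreasing lexicographic order on the rank sequences with `+∞` appended. -/
def labLt [Fintype V] [Nonempty V] (adj : V → V → Prop) (L : Finset V) (r : V → ℕ∞)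
    (u v : V) : Prop :=
  List.Lex (· < ·) (rankSeq adj L r v) (rankSeq adj L r u)


section Aux

variable [Fintype V] [Nonempty V] {adj : V → V → Prop} {L : Finset V} {r : V → ℕ∞} {v u : V}

lemma mem_predSet {a b : V} : a ∈ predSet adj b ↔ reach adj a b := by
  simp [predSet]

lemma mem_succSet {a b : V} : a ∈ succSet adj b ↔ reach adj b a := by
  simp [succSet]

lemma argminR_mem (r : V → ℕ∞) (A : Finset V) (h : A.Nonempty) : argminR r A ∈ A := by
  rw [argminR, dif_pos h]
  exact (Finset.exists_min_image A r h).choose_spec.1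

lemma labVertex_mem {i : ℕ} (h : (Aset adj L r v i).Nonempty) :
    labVertex adj L r v i ∈ Aset adj L r v i := argminR_mem r _ h

lemma Aset_succ_def (i : ℕ) : Aset adj L r v (i + 1) =
    if (Aset adj L r v i).Nonempty then
      (succSet adj (labVertex adj L r v i) ∩ predSet adj v ∩ L).erase
        (labVertex adj L r v i)
    else ∅ := rfl

lemma Aset_zero : Aset adj L r v 0 = predSet adj v ∩ L := rfl

lemma Aset_subset (i : ℕ) : Aset adj L r v i ⊆ predSet adj v ∩ L := by
  cases i with
  | zero => exact Finset.Subset.refl _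
  | succ j =>
    rw [Aset_succ_def]
    split
    · intro x hx
      have hx' := Finset.mem_of_mem_erase hx
      simp only [Finset.mem_inter] at hx' ⊢
      exact ⟨hx'.1.2, hx'.2⟩
    · intro x hx
      exact absurd hx (Finset.notMem_empty x)

lemma reach_antisymm (hacyc : IsAcyclic adj) {a b : V} (h1 : reach adj a b)
    (h2 : reach adj b a) : a = b := by
  rcases Relation.reflTransGen_iff_eq_or_transGen.mp h1 with h | h
  · exact h.symm
  · exact absurd (Relation.TransGen.trans_left h h2) (hacyc a)

lemma Aset_empty_succ {i : ℕ} (h : ¬ (Aset adj L r v i).Nonempty) :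
    Aset adj L r v (i + 1) = ∅ := by
  rw [Aset_succ_def, if_neg h]

lemma Aset_antitone {i : ℕ} (h : (Aset adj L r v (i + 1)).Nonempty) :
    (Aset adj L r v i).Nonempty := by
  by_contra hc
  rw [Aset_empty_succ hc] at h
  exact absurd h (by simp)

lemma Aset_succ_subset (hacyc : IsAcyclic adj) (i : ℕ) (h : (Aset adj L r v i).Nonempty) :
    Aset adj L r v (i + 1) ⊆ (Aset adj L r v i).erase (labVertex adj L r v i) := by
  cases i with
  | zero =>
    rw [Aset_succ_def, if_pos h]
    intro x hx
    rw [Finset.mem_erase] at hx ⊢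
    refine ⟨hx.1, ?_⟩
    have hx' := hx.2
    rw [Aset_zero]
    simp only [Finset.mem_inter] at hx' ⊢
    exact ⟨hx'.1.2, hx'.2⟩
  | succ j =>
    have hj : (Aset adj L r v j).Nonempty := Aset_antitone h
    have hmem : labVertex adj L r v (j + 1) ∈ Aset adj L r v (j + 1) := labVertex_mem h
    rw [Aset_succ_def j, if_pos hj, Finset.mem_erase, Finset.mem_inter, Finset.mem_inter,
      mem_succSet] at hmem
    intro x hx
    rw [Aset_succ_def (j + 1), if_pos h, Finset.mem_erase, Finset.mem_inter, Finset.mem_inter,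
      mem_succSet] at hx
    rw [Finset.mem_erase]
    refine ⟨hx.1, ?_⟩
    rw [Aset_succ_def j, if_pos hj, Finset.mem_erase, Finset.mem_inter, Finset.mem_inter,
      mem_succSet]
    have hreach : reach adj (labVertex adj L r v j) x :=
      Relation.ReflTransGen.trans hmem.2.1.1 hx.2.1.1
    refine ⟨?_, ⟨hreach, hx.2.1.2⟩, hx.2.2⟩
    intro hxeq
    subst hxeq
    exact hmem.1 (reach_antisymm hacyc hx.2.1.1 hmem.2.1.1)

lemma Aset_card_le (hacyc : IsAcyclic adj) :
    ∀ i : ℕ, (Aset adj L r v i).Nonempty → i + (Aset adj L r v i).card ≤ Fintype.card V := by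
  intro i
  induction i with
  | zero =>
    intro _
    simpa using Finset.card_le_univ (Aset adj L r v 0)
  | succ j ih =>
    intro h
    have hj : (Aset adj L r v j).Nonempty := Aset_antitone h
    have h1 := Finset.card_le_card (Aset_succ_subset hacyc j hj)
    rw [Finset.card_erase_of_mem (labVertex_mem hj)] at h1
    have h2 := ih hj
    have h3 : 1 ≤ (Aset adj L r v j).card := Finset.card_pos.mpr hj
    omega

lemma Aset_empty_mono {i j : ℕ} (hij : i ≤ j) (h : Aset adj L r v i = ∅) :
    Aset adj L r v j = ∅ := by
  induction j with
  | zero =>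
    have : i = 0 := Nat.le_zero.mp hij
    subst this; exact h
  | succ k ih =>
    rcases Nat.lt_or_ge i (k + 1) with hlt | hge
    · have hk : Aset adj L r v k = ∅ := ih (Nat.lt_succ_iff.mp hlt)
      exact Aset_empty_succ (by simp [hk])
    · have : i = k + 1 := le_antisymm hij hge
      subst this; exact h

lemma Aset_card_empty (hacyc : IsAcyclic adj) :
    Aset adj L r v (Fintype.card V) = ∅ := by
  by_contra h
  have hne : (Aset adj L r v (Fintype.card V)).Nonempty :=
    Finset.nonempty_iff_ne_empty.mpr h
  have h1 := Aset_card_le hacyc (Fintype.card V) hne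
  have h2 : 1 ≤ (Aset adj L r v (Fintype.card V)).card := Finset.card_pos.mpr hne
  omega

lemma Aset_nonempty_of_lt_kOf (hacyc : IsAcyclic adj) {i : ℕ} (hi : i < kOf adj L r v) :
    (Aset adj L r v i).Nonempty := by
  by_contra hc
  have hemp : Aset adj L r v i = ∅ := Finset.not_nonempty_iff_eq_empty.mp hc
  have hsub : ((Finset.range (Fintype.card V + 1)).filter
      fun j => (Aset adj L r v j).Nonempty) ⊆ Finset.range i := by
    intro j hj
    rw [Finset.mem_filter] at hj
    rw [Finset.mem_range]
    by_contra hge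
    have := Aset_empty_mono (Nat.le_of_not_lt hge) hemp
    rw [this] at hj
    exact absurd hj.2 (by simp)
  have := Finset.card_le_card hsub
  rw [Finset.card_range] at this
  unfold kOf at hi
  omega

lemma kOf_le (hacyc : IsAcyclic adj) : kOf adj L r v ≤ Fintype.card V := by
  have hsub : ((Finset.range (Fintype.card V + 1)).filter
      fun j => (Aset adj L r v j).Nonempty) ⊆ Finset.range (Fintype.card V) := by
    intro j hj
    rw [Finset.mem_filter, Finset.mem_range] at hj
    rw [Finset.mem_range]
    rcases Nat.lt_or_ge j (Fintype.card V) with h | h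
    · exact h
    · exfalso
      have : Aset adj L r v j = ∅ := Aset_empty_mono h (Aset_card_empty hacyc)
      rw [this] at hj
      exact absurd hj.2 (by simp)
  have := Finset.card_le_card hsub
  rw [Finset.card_range] at this
  exact this

lemma Aset_kOf_empty (hacyc : IsAcyclic adj) :
    Aset adj L r v (kOf adj L r v) = ∅ := by
  by_contra h
  have hne : (Aset adj L r v (kOf adj L r v)).Nonempty :=
    Finset.nonempty_iff_ne_empty.mpr h
  have hk := kOf_le (adj := adj) (L := L) (r := r) (v := v) hacyc
  have hsub : Finset.range (kOf adj L r v + 1) ⊆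
      ((Finset.range (Fintype.card V + 1)).filter fun j => (Aset adj L r v j).Nonempty) := by
    intro j hj
    rw [Finset.mem_range] at hj
    rw [Finset.mem_filter, Finset.mem_range]
    constructor
    · omega
    · by_contra hc
      have hemp : Aset adj L r v j = ∅ := Finset.not_nonempty_iff_eq_empty.mp hc
      have := Aset_empty_mono (Nat.lt_succ_iff.mp hj) hemp
      rw [this] at hne
      exact absurd hne (by simp)
  have := Finset.card_le_card hsub
  rw [Finset.card_range] at this
  unfold kOf at this
  omega

lemma self_mem_Aset (hacyc : IsAcyclic adj) (hu : u ∈ L) :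
    ∀ i : ℕ, i < kOf adj L r u → u ∈ Aset adj L r u i := by
  intro i
  induction i with
  | zero =>
    intro _
    show u ∈ predSet adj u ∩ L
    rw [Finset.mem_inter, mem_predSet]
    exact ⟨Relation.ReflTransGen.refl, hu⟩
  | succ j ih =>
    intro hj1
    have hj : j < kOf adj L r u := Nat.lt_of_succ_lt hj1
    have humem : u ∈ Aset adj L r u j := ih hj
    have hjne : (Aset adj L r u j).Nonempty := ⟨u, humem⟩
    have hjne1 : (Aset adj L r u (j + 1)).Nonempty := Aset_nonempty_of_lt_kOf hacyc hj1
    set ℓ := labVertex adj L r u j with hℓ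
    have hℓmem : ℓ ∈ Aset adj L r u j := labVertex_mem hjne
    have hℓpred : reach adj ℓ u := by
      have := Aset_subset j hℓmem
      rw [Finset.mem_inter, mem_predSet] at this
      exact this.1
    by_cases heq : ℓ = u
    · exfalso
      obtain ⟨x, hx⟩ := hjne1
      rw [Aset_succ_def, if_pos hjne, Finset.mem_erase, Finset.mem_inter, Finset.mem_inter,
        mem_succSet, mem_predSet] at hx
      rw [← hℓ, heq] at hx
      exact hx.1 (reach_antisymm hacyc hx.2.1.2 hx.2.1.1)
    · rw [Aset_succ_def, if_pos hjne, Finset.mem_erase, Finset.mem_inter, Finset.mem_inter,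
        mem_succSet, mem_predSet]
      exact ⟨fun h => heq h.symm, ⟨hℓpred, Relation.ReflTransGen.refl⟩, hu⟩

lemma one_le_kOf (hu : u ∈ L) : 1 ≤ kOf adj L r u := by
  have h0 : u ∈ Aset adj L r u 0 := by
    show u ∈ predSet adj u ∩ L
    rw [Finset.mem_inter, mem_predSet]
    exact ⟨Relation.ReflTransGen.refl, hu⟩
  have : (0 : ℕ) ∈ (Finset.range (Fintype.card V + 1)).filter
      fun j => (Aset adj L r u j).Nonempty := by
    rw [Finset.mem_filter, Finset.mem_range]
    exact ⟨by omega, ⟨u, h0⟩⟩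
  exact Finset.card_pos.mpr ⟨0, this⟩

lemma self_mem_labelSeq (hacyc : IsAcyclic adj) (hu : u ∈ L) :
    u ∈ labelSeq adj L r u := by
  set k := kOf adj L r u with hk
  have hk1 : 1 ≤ k := one_le_kOf hu
  have hlt : k - 1 < k := by omega
  have humem : u ∈ Aset adj L r u (k - 1) := self_mem_Aset hacyc hu (k - 1) hlt
  have hne : (Aset adj L r u (k - 1)).Nonempty := ⟨u, humem⟩
  have hkemp : Aset adj L r u k = ∅ := Aset_kOf_empty hacyc
  have hkey : labVertex adj L r u (k - 1) = u := by
    by_contra hne'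
    set ℓ := labVertex adj L r u (k - 1) with hℓ
    have hℓmem : ℓ ∈ Aset adj L r u (k - 1) := labVertex_mem hne
    have hℓpred : reach adj ℓ u := by
      have := Aset_subset (k - 1) hℓmem
      rw [Finset.mem_inter, mem_predSet] at this
      exact this.1
    have : u ∈ Aset adj L r u ((k - 1) + 1) := by
      rw [Aset_succ_def, if_pos hne, Finset.mem_erase, Finset.mem_inter, Finset.mem_inter,
        mem_succSet, mem_predSet]
      exact ⟨fun h => hne' h.symm, ⟨hℓpred, Relation.ReflTransGen.refl⟩, hu⟩
    rw [show (k - 1) + 1 = k by omega, hkemp] at this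
    exact absurd this (by simp)
  rw [labelSeq, List.mem_map]
  exact ⟨k - 1, List.mem_range.mpr hlt, hkey⟩

end Aux

/-- if `ℓ(u)` is a prefix of `ℓ(v)` and `u` is ranked then `v` is
reachable from `u`. -/
theorem reachable_of_label_prefix [Fintype V] [Nonempty V]
    (adj : V → V → Prop) (hacyc : IsAcyclic adj)
    (L : Finset V) (r : V → ℕ∞)
    (hfin : ∀ w ∈ L, r w ≠ ⊤) (hpos : ∀ w ∈ L, 0 < r w)
    (hinf : ∀ w ∉ L, r w = ⊤) (hinj : Set.InjOn r L)
    (u v : V) (hpre : (labelSeq adj L r u).IsPrefix (labelSeq adj L r v))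
    (hu : u ∈ L) :
    reach adj u v := by
  have hself : u ∈ labelSeq adj L r u := self_mem_labelSeq hacyc hu
  have hmemv : u ∈ labelSeq adj L r v := hpre.subset hself
  rw [labelSeq, List.mem_map] at hmemv
  obtain ⟨i, hi, heq⟩ := hmemv
  rw [List.mem_range] at hi
  have hne : (Aset adj L r v i).Nonempty := Aset_nonempty_of_lt_kOf hacyc hi
  have hmem : labVertex adj L r v i ∈ Aset adj L r v i := labVertex_mem hne
  have := Aset_subset i hmem
  rw [Finset.mem_inter, mem_predSet, heq] at this
  exact this.1
end
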